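/- arXiv:1701.00616 — 8 statements merged into one kernel-verified Lean document; each statement's English description precedes it below -/
import Mathlib

section
/- Let f : ℝⁿ → ℝᵐ, α ∈ (0,1], and a = (a₁,...,aₙ) ∈ ℝⁿ with each aᵢ > 0. If f is α-differentiable at a and f is (Fréchet) differentiable at a with derivative Df(a), then D^α f(a) = Df(a) ∘ L_a^{1-α}, where L_a^{1-α} : ℝⁿ → ℝⁿ is the linear map defined by L_a^{1-α}(x₁,...,xₙ) = (a₁^{1-α}x₁, ..., aₙ^{1-α}xₙ). -/
open Filter Topology

/-- The conformably shifted point `(a₁ + h₁a₁^{1-α}, ..., aₙ + hₙaₙ^{1-α})`. -/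
noncomputable def confShift {n : ℕ} (α : ℝ) (a h : EuclideanSpace ℝ (Fin n)) :
    EuclideanSpace ℝ (Fin n) :=
  WithLp.toLp 2 (fun i => a i + h i * a i ^ (1 - α))

/-- `f` is conformably `α`-differentiable at `a` with conformable derivative the
linear map `L`, i.e. `lim_{h→0} ‖f(a₁+h₁a₁^{1-α},...,aₙ+hₙaₙ^{1-α}) - f(a) - L(h)‖/‖h‖ = 0`. -/
def ConformableAt {n : ℕ} {F : Type*} [NormedAddCommGroup F] [NormedSpace ℝ F]
    (α : ℝ) (f : EuclideanSpace ℝ (Fin n) → F) (a : EuclideanSpace ℝ (Fin n))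
    (L : EuclideanSpace ℝ (Fin n) →ₗ[ℝ] F) : Prop :=
  Filter.Tendsto (fun h : EuclideanSpace ℝ (Fin n) =>
      ‖f (confShift α a h) - f a - L h‖ / ‖h‖) (𝓝[≠] 0) (𝓝 0)

/-- The scaling linear map `x ↦ (aᵢ^{1-α} xᵢ)ᵢ`. -/
noncomputable def scalingMap {n : ℕ} (α : ℝ) (a : EuclideanSpace ℝ (Fin n)) :
    EuclideanSpace ℝ (Fin n) →ₗ[ℝ] EuclideanSpace ℝ (Fin n) where
  toFun x := WithLp.toLp 2 (fun i => a i ^ (1 - α) * x i)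
  map_add' x y := by ext i; simp [mul_add]
  map_smul' c x := by ext i; simp [smul_eq_mul]; ring

/-- If `f` is conformably `α`-differentiable at `a` and Fréchet differentiable at `a`
with derivative `Df`, then `D^α f(a) = Df ∘ L_a^{1-α}` where
`L_a^{1-α}(x₁,...,xₙ) = (a₁^{1-α}x₁,...,aₙ^{1-α}xₙ)`. -/
theorem conformable_eq_fderiv_comp_scaling {n m : ℕ} (α : ℝ) (hα : α ∈ Set.Ioc (0:ℝ) 1)
    (f : EuclideanSpace ℝ (Fin n) → EuclideanSpace ℝ (Fin m))
    (a : EuclideanSpace ℝ (Fin n)) (ha : ∀ i, 0 < a i)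
    (L : EuclideanSpace ℝ (Fin n) →ₗ[ℝ] EuclideanSpace ℝ (Fin m))
    (hL : ConformableAt α f a L)
    (Df : EuclideanSpace ℝ (Fin n) →L[ℝ] EuclideanSpace ℝ (Fin m))
    (hDf : HasFDerivAt f Df a) :
    ∀ x : EuclideanSpace ℝ (Fin n),
      L x = Df (WithLp.toLp 2 (fun i => a i ^ (1 - α) * x i) : EuclideanSpace ℝ (Fin n)) := by
  intro x
  set S : EuclideanSpace ℝ (Fin n) →L[ℝ] EuclideanSpace ℝ (Fin n) :=
    (scalingMap α a).toContinuousLinearMap with hS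
  set Lc : EuclideanSpace ℝ (Fin n) →L[ℝ] EuclideanSpace ℝ (Fin m) :=
    L.toContinuousLinearMap with hLc
  have hshift : ∀ h : EuclideanSpace ℝ (Fin n), confShift α a h = a + S h := by
    intro h; ext i
    simp [confShift, scalingMap, hS]
    ring
  -- g has derivative Df ∘ S at 0
  set g : EuclideanSpace ℝ (Fin n) → EuclideanSpace ℝ (Fin m) :=
    fun h => f (confShift α a h) with hg
  have hinner : HasFDerivAt (fun h : EuclideanSpace ℝ (Fin n) => a + S h) S 0 := by
    have := ((hasFDerivAt_const a 0).add S.hasFDerivAt : HasFDerivAt (fun h => a + S h) (0 + S) 0)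
    rwa [zero_add] at this
  have h1 : HasFDerivAt g (Df.comp S) 0 := by
    have : HasFDerivAt f Df (a + S 0) := by simpa using hDf
    have := this.comp 0 hinner
    refine this.congr_of_eventuallyEq ?_
    filter_upwards with h
    simp [hg, Function.comp, hshift h]
  -- g has derivative Lc at 0
  have h2 : HasFDerivAt g Lc 0 := by
    rw [hasFDerivAt_iff_tendsto]
    have key : Tendsto (fun h : EuclideanSpace ℝ (Fin n) =>
        ‖h - 0‖⁻¹ * ‖g h - g 0 - Lc (h - 0)‖) (𝓝[≠] 0) (𝓝 0) := by
      refine hL.congr ?_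
      intro h
      simp [hg, hLc, div_eq_inv_mul, hshift]
    have : 𝓝 (0 : EuclideanSpace ℝ (Fin n)) = 𝓝[≠] 0 ⊔ pure 0 :=
      (nhdsNE_sup_pure 0).symm
    rw [this, tendsto_sup]
    refine ⟨key, ?_⟩
    simp [tendsto_pure_left]
    intro s hs
    simpa using mem_of_mem_nhds hs
  have := h2.unique h1
  have hx : Lc x = (Df.comp S) x := by rw [this]
  simpa [hLc, hS, scalingMap] using hx
end

section
/- Let f : ℝⁿ → ℝᵐ, α ∈ (0,1], and a = (a₁,...,aₙ) ∈ ℝⁿ with each aᵢ > 0. If f is (Fréchet) differentiable at a, then f is α-differentiable at a and the conformable Jacobian matrix satisfies f^α(a) = f'(a) · diag(a₁^{1-α}, ..., aₙ^{1-α}), i.e., its (i,j) entry equals aⱼ^{1-α} times the (i,j) entry of the usual Jacobian matrix f'(a) of f at a. -/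
open Filter Topology

/-- The linear diagonal scaling map `h ↦ (h₁a₁^{1-α}, ..., hₙaₙ^{1-α})`. -/
noncomputable def diagScale {n : ℕ} (α : ℝ) (a : EuclideanSpace ℝ (Fin n)) :
    EuclideanSpace ℝ (Fin n) →ₗ[ℝ] EuclideanSpace ℝ (Fin n) where
  toFun h := WithLp.toLp 2 (fun i => h i * a i ^ (1 - α))
  map_add' x y := by ext i; simp [add_mul]
  map_smul' c x := by ext i; simp [mul_assoc]

/-- If `f` is Fréchet differentiable at `a` (each `aᵢ > 0`), then `f` is conformably
`α`-differentiable at `a` and the conformable Jacobian matrix satisfies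
`f^α(a) = f'(a) · diag(a₁^{1-α},...,aₙ^{1-α})`, entrywise
`f^α(a)_{ij} = aⱼ^{1-α} · f'(a)_{ij}`. -/
theorem conformable_of_differentiable_jacobian {n m : ℕ} (α : ℝ) (hα : α ∈ Set.Ioc (0:ℝ) 1)
    (f : EuclideanSpace ℝ (Fin n) → EuclideanSpace ℝ (Fin m))
    (a : EuclideanSpace ℝ (Fin n)) (ha : ∀ i, 0 < a i)
    (hf : DifferentiableAt ℝ f a) :
    ∃ L : EuclideanSpace ℝ (Fin n) →ₗ[ℝ] EuclideanSpace ℝ (Fin m),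
      ConformableAt α f a L ∧
      ∀ (i : Fin m) (j : Fin n),
        L (EuclideanSpace.single j 1) i
          = a j ^ (1 - α) * (fderiv ℝ f a) (EuclideanSpace.single j 1) i := by
  set D : EuclideanSpace ℝ (Fin n) →L[ℝ] EuclideanSpace ℝ (Fin n) :=
    (diagScale α a).toContinuousLinearMap with hD
  set L : EuclideanSpace ℝ (Fin n) →L[ℝ] EuclideanSpace ℝ (Fin m) :=
    (fderiv ℝ f a).comp D with hL
  refine ⟨L.toLinearMap, ?_, ?_⟩
  · -- the map h ↦ f (confShift α a h) has derivative L at 0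
    have hg : HasFDerivAt (fun h : EuclideanSpace ℝ (Fin n) => a + D h) D 0 := by
      exact D.hasFDerivAt.const_add a
    have hg0 : (fun h : EuclideanSpace ℝ (Fin n) => a + D h) 0 = a := by simp
    have hcomp : HasFDerivAt (fun h => f (a + D h)) L 0 := by
      have := HasFDerivAt.comp (x := (0 : EuclideanSpace ℝ (Fin n)))
        (hg0 ▸ hf.hasFDerivAt) hg
      simp only [map_zero, add_zero] at this
      exact this
    have key := hasFDerivAt_iff_tendsto.mp hcomp
    rw [ConformableAt]
    refine (key.mono_left nhdsWithin_le_nhds).congr (fun h => ?_)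
    have hcs : confShift α a h = a + D h := by
      ext i
      simp [confShift, D, diagScale]
    simp [hcs, div_eq_inv_mul]
  · intro i j
    have hsingle : D (EuclideanSpace.single j 1)
        = a j ^ (1 - α) • EuclideanSpace.single j 1 := by
      ext k
      have hDk : D (EuclideanSpace.single j 1) k
          = EuclideanSpace.single j (1:ℝ) k * a k ^ (1 - α) := rfl
      rw [hDk]
      by_cases hkj : k = j
      · subst hkj
        simp [EuclideanSpace.single_apply, mul_comm]
      · simp [EuclideanSpace.single_apply, hkj]
    have hLs : L (EuclideanSpace.single j 1)
        = a j ^ (1 - α) • (fderiv ℝ f a) (EuclideanSpace.single j 1) := by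
      rw [hL, ContinuousLinearMap.comp_apply, hsingle, ContinuousLinearMap.map_smul]
    show L (EuclideanSpace.single j 1) i = _
    rw [hLs]
    rfl
end

section
/- (Chain rule) Let α ∈ (0,1], f : ℝⁿ → ℝᵐ with component functions f₁,...,fₘ, and g : ℝᵐ → ℝᵖ. Let a = (a₁,...,aₙ) ∈ ℝⁿ with each aᵢ > 0 and suppose fᵢ(a) > 0 for all i = 1,...,m. If f is α-differentiable at a and g is α-differentiable at f(a), then g ∘ f is α-differentiable at a and D^α(g ∘ f)(a) = D^α g(f(a)) ∘ f(a)^{α-1} ∘ D^α f(a), where f(a)^{α-1} : ℝᵐ → ℝᵐ is the linear map defined by f(a)^{α-1}(x₁,...,xₘ) = (x₁ f₁(a)^{α-1}, ..., xₘ fₘ(a)^{α-1}). -/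
open Filter Topology Asymptotics

namespace ConfAux

variable {n : ℕ} {F : Type*} [NormedAddCommGroup F] [NormedSpace ℝ F]

noncomputable def diagCLM (w : EuclideanSpace ℝ (Fin n)) :
    EuclideanSpace ℝ (Fin n) →L[ℝ] EuclideanSpace ℝ (Fin n) :=
  LinearMap.toContinuousLinearMap
  { toFun := fun x => (WithLp.toLp 2 (fun i => x i * w i) : EuclideanSpace ℝ (Fin n))
    map_add' := by intro x y; ext i; simp [add_mul]
    map_smul' := by intro c x; ext i; simp [mul_assoc] }

@[simp] lemma diagCLM_apply (w x : EuclideanSpace ℝ (Fin n)) (i : Fin n) :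
    diagCLM w x i = x i * w i := rfl

lemma cancel {α t : ℝ} (ht : 0 < t) : t ^ (1 - α) * t ^ (α - 1) = 1 := by
  rw [← Real.rpow_add ht]
  norm_num

lemma confShift_eq (α : ℝ) (a h : EuclideanSpace ℝ (Fin n)) :
    confShift α a h = a + diagCLM (WithLp.toLp 2 (fun i => a i ^ (1 - α))) h := by
  ext i
  simp [confShift]

lemma diag_cancel₁ (α : ℝ) (a : EuclideanSpace ℝ (Fin n)) (ha : ∀ i, 0 < a i)
    (x : EuclideanSpace ℝ (Fin n)) :
    diagCLM (WithLp.toLp 2 (fun i => a i ^ (α - 1))) (diagCLM (WithLp.toLp 2 (fun i => a i ^ (1 - α))) x) = x := by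
  ext i
  simp [mul_assoc, cancel (ha i)]

lemma diag_cancel₂ (α : ℝ) (a : EuclideanSpace ℝ (Fin n)) (ha : ∀ i, 0 < a i)
    (x : EuclideanSpace ℝ (Fin n)) :
    diagCLM (WithLp.toLp 2 (fun i => a i ^ (1 - α))) (diagCLM (WithLp.toLp 2 (fun i => a i ^ (α - 1))) x) = x := by
  ext i
  have := cancel (α := α) (ha i)
  simp [mul_assoc]
  rw [mul_comm (a i ^ (α - 1)), this, mul_one]

/-- Step 1: `ConformableAt` as a little-o statement. -/
lemma conformableAt_iff_isLittleO (α : ℝ) (f : EuclideanSpace ℝ (Fin n) → F)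
    (a : EuclideanSpace ℝ (Fin n)) (L : EuclideanSpace ℝ (Fin n) →ₗ[ℝ] F) :
    ConformableAt α f a L ↔
      (fun h => f (confShift α a h) - f a - L h) =o[𝓝 (0 : EuclideanSpace ℝ (Fin n))]
        (fun h => h) := by
  set G : EuclideanSpace ℝ (Fin n) → F := fun h => f (confShift α a h) - f a - L h with hG
  have hG0 : G 0 = 0 := by
    have : confShift α a 0 = a := by ext i; simp [confShift]
    simp [hG, this]
  have key : (G =o[𝓝 (0 : EuclideanSpace ℝ (Fin n))] fun h => h) ↔
      Tendsto (fun h => ‖G h‖ / ‖h‖) (𝓝 0) (𝓝 0) := by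
    rw [← isLittleO_norm_norm]
    exact isLittleO_iff_tendsto (fun h hh => by
      have : h = 0 := by simpa using hh
      simp [this, hG0])
  rw [key]
  constructor
  · intro h
    rw [← nhdsNE_sup_pure (0 : EuclideanSpace ℝ (Fin n))]
    rw [tendsto_sup]
    refine ⟨h, ?_⟩
    simpa [hG0] using tendsto_pure_nhds (fun h : EuclideanSpace ℝ (Fin n) => ‖G h‖ / ‖h‖) 0
  · intro h
    exact h.mono_left nhdsWithin_le_nhds

/-- Step 2: `ConformableAt` iff `HasFDerivAt` with the rescaled derivative. -/
lemma conformableAt_iff_hasFDerivAt (α : ℝ) (f : EuclideanSpace ℝ (Fin n) → F)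
    (a : EuclideanSpace ℝ (Fin n)) (ha : ∀ i, 0 < a i)
    (L : EuclideanSpace ℝ (Fin n) →ₗ[ℝ] F) :
    ConformableAt α f a L ↔
      HasFDerivAt f
        ((LinearMap.toContinuousLinearMap L).comp (diagCLM (WithLp.toLp 2 (fun i => a i ^ (α - 1))))) a := by
  set D := diagCLM (n := n) (WithLp.toLp 2 (fun i => a i ^ (1 - α))) with hD
  set Di := diagCLM (n := n) (WithLp.toLp 2 (fun i => a i ^ (α - 1))) with hDi
  set C := (LinearMap.toContinuousLinearMap L).comp Di with hC
  rw [conformableAt_iff_isLittleO, hasFDerivAt_iff_isLittleO_nhds_zero]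
  have hDDi : ∀ x, D (Di x) = x := diag_cancel₂ α a ha
  have hDiD : ∀ x, Di (D x) = x := diag_cancel₁ α a ha
  have hD0 : Tendsto (⇑D) (𝓝 0) (𝓝 (0 : EuclideanSpace ℝ (Fin n))) := by
    simpa using D.continuous.tendsto 0
  have hDi0 : Tendsto (⇑Di) (𝓝 0) (𝓝 (0 : EuclideanSpace ℝ (Fin n))) := by
    simpa using Di.continuous.tendsto 0
  constructor
  · intro h
    have h2 := (h.comp_tendsto hDi0).trans_isBigO (Di.isBigO_id _)
    have : ((fun h => f (confShift α a h) - f a - L h) ∘ ⇑Di)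
        = fun k => f (a + k) - f a - C k := by
      funext k
      simp [Function.comp, confShift_eq, ← hD, hDDi, hC]
    rwa [this] at h2
  · intro h
    have h2 := (h.comp_tendsto hD0).trans_isBigO (D.isBigO_id _)
    have : ((fun k => f (a + k) - f a - C k) ∘ ⇑D)
        = fun h => f (confShift α a h) - f a - L h := by
      funext h
      simp [Function.comp, confShift_eq, ← hD, hDiD, hC]
    rwa [this] at h2

end ConfAux

open ConfAux in
/-- Chain rule: if `f` is conformably `α`-differentiable at `a` (each `aᵢ > 0`,
each `fᵢ(a) > 0`) and `g` is conformably `α`-differentiable at `f(a)`, then `g ∘ f`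
is conformably `α`-differentiable at `a` with
`D^α(g ∘ f)(a) = D^α g(f(a)) ∘ f(a)^{α-1} ∘ D^α f(a)`, where
`f(a)^{α-1}(x₁,...,xₘ) = (x₁f₁(a)^{α-1},...,xₘfₘ(a)^{α-1})`. -/
theorem conformable_chain_rule {n m p : ℕ} (α : ℝ) (hα : α ∈ Set.Ioc (0:ℝ) 1)
    (f : EuclideanSpace ℝ (Fin n) → EuclideanSpace ℝ (Fin m))
    (g : EuclideanSpace ℝ (Fin m) → EuclideanSpace ℝ (Fin p))
    (a : EuclideanSpace ℝ (Fin n)) (ha : ∀ i, 0 < a i) (hfa : ∀ i, 0 < f a i)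
    (L : EuclideanSpace ℝ (Fin n) →ₗ[ℝ] EuclideanSpace ℝ (Fin m))
    (M : EuclideanSpace ℝ (Fin m) →ₗ[ℝ] EuclideanSpace ℝ (Fin p))
    (hf : ConformableAt α f a L) (hg : ConformableAt α g (f a) M) :
    ∃ N : EuclideanSpace ℝ (Fin n) →ₗ[ℝ] EuclideanSpace ℝ (Fin p),
      ConformableAt α (g ∘ f) a N ∧
      ∀ h : EuclideanSpace ℝ (Fin n),
        N h = M (WithLp.toLp 2 (fun i => f a i ^ (α - 1) * L h i) : EuclideanSpace ℝ (Fin m)) := by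
  rw [conformableAt_iff_hasFDerivAt α f a ha] at hf
  rw [conformableAt_iff_hasFDerivAt α g (f a) hfa] at hg
  set N : EuclideanSpace ℝ (Fin n) →ₗ[ℝ] EuclideanSpace ℝ (Fin p) :=
    M ∘ₗ (diagCLM (WithLp.toLp 2 (fun i => f a i ^ (α - 1))) : _ →L[ℝ] _).toLinearMap ∘ₗ L with hN
  refine ⟨N, ?_, ?_⟩
  · rw [conformableAt_iff_hasFDerivAt α (g ∘ f) a ha]
    have hcomp := hg.comp a hf
    have heq : (LinearMap.toContinuousLinearMap N).comp
        (diagCLM (WithLp.toLp 2 (fun i => a i ^ (α - 1))))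
        = (((LinearMap.toContinuousLinearMap M).comp
            (diagCLM (WithLp.toLp 2 (fun i => f a i ^ (α - 1))))).comp
           ((LinearMap.toContinuousLinearMap L).comp
            (diagCLM (WithLp.toLp 2 (fun i => a i ^ (α - 1)))))) := by
      ext h
      simp [hN]
    rw [heq]
    exact hcomp
  · intro h
    have harg : (diagCLM (WithLp.toLp 2 (fun i => f a i ^ (α - 1))) (L h))
        = (WithLp.toLp 2 (fun i => f a i ^ (α - 1) * L h i) : EuclideanSpace ℝ (Fin m)) := by
      ext i
      exact mul_comm _ _
    rw [hN]
    simp [LinearMap.comp_apply, ← harg]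
end

section
/- Let α ∈ (0,1] and f, g : ℝ → ℝ. Let a > 0 with f(a) > 0. If f is α-differentiable at a (i.e., T_α(f)(a) exists) and g is α-differentiable at f(a), then g ∘ f is α-differentiable at a and T_α(g ∘ f)(a) = T_α(g)(f(a)) · T_α(f)(a) · f(a)^{α-1}. -/
open Filter Topology

/-- `f` has conformable derivative `L` of order `α` at `x`, i.e.
`T_α(f)(x) = lim_{h→0} (f(x + h·x^{1-α}) - f(x))/h` exists and equals `L`. -/
def HasConfDerivAt (α : ℝ) (f : ℝ → ℝ) (x L : ℝ) : Prop :=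
  Filter.Tendsto (fun h : ℝ => (f (x + h * x ^ (1 - α)) - f x) / h) (𝓝[≠] (0:ℝ)) (𝓝 L)
lemma conf_iff_deriv (α : ℝ) (f : ℝ → ℝ) (x L : ℝ) (hx : 0 < x) :
    HasConfDerivAt α f x L ↔ HasDerivAt f (L * x ^ (α - 1)) x := by
  set c : ℝ := x ^ (1 - α) with hc
  have hcpos : 0 < c := Real.rpow_pos_of_pos hx _
  have hcinv : x ^ (α - 1) = c⁻¹ := by
    rw [hc, ← Real.rpow_neg hx.le]; ring_nf
  have he : Tendsto (fun h : ℝ => x + h * c) (𝓝[≠] (0:ℝ)) (𝓝[≠] x) := by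
    rw [tendsto_nhdsWithin_iff]
    constructor
    · have hcont : Continuous fun h : ℝ => x + h * c := by continuity
      exact (hcont.tendsto' 0 x (by simp)).mono_left nhdsWithin_le_nhds
    · filter_upwards [self_mem_nhdsWithin] with h hh
      simp only [Set.mem_compl_iff, Set.mem_singleton_iff] at hh ⊢
      intro hcon
      have : h * c = 0 := by linarith
      rcases mul_eq_zero.1 this with h0 | h0
      · exact hh h0
      · exact hcpos.ne' h0
  have he' : Tendsto (fun y : ℝ => (y - x) / c) (𝓝[≠] x) (𝓝[≠] (0:ℝ)) := by
    rw [tendsto_nhdsWithin_iff]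
    constructor
    · have hcont : Continuous fun y : ℝ => (y - x) / c := by continuity
      exact (hcont.tendsto' x 0 (by simp)).mono_left nhdsWithin_le_nhds
    · filter_upwards [self_mem_nhdsWithin] with y hy
      simp only [Set.mem_compl_iff, Set.mem_singleton_iff] at hy ⊢
      intro hcon
      exact hy (by field_simp at hcon; linarith)
  rw [hasDerivAt_iff_tendsto_slope]
  constructor
  · intro hconf
    have h1 : Tendsto (fun y : ℝ => (f (x + ((y - x) / c) * c) - f x) / ((y - x) / c))
        (𝓝[≠] x) (𝓝 L) := hconf.comp he'
    have h2 : Tendsto (fun y : ℝ => slope f x y * c) (𝓝[≠] x) (𝓝 L) := by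
      refine h1.congr' ?_
      filter_upwards [self_mem_nhdsWithin] with y hy
      simp only [Set.mem_compl_iff, Set.mem_singleton_iff] at hy
      have hyx : y - x ≠ 0 := sub_ne_zero.2 hy
      rw [slope_def_field]
      field_simp
      ring_nf
    have h3 := h2.div_const c
    rw [hcinv]
    have heq : L / c = L * c⁻¹ := by rw [div_eq_mul_inv]
    rw [← heq]
    refine h3.congr ?_
    intro y
    field_simp
  · intro hd
    have h1 : Tendsto (fun h : ℝ => slope f x (x + h * c)) (𝓝[≠] (0:ℝ)) (𝓝 (L * x ^ (α - 1))) :=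
      hd.comp he
    have h2 := h1.mul_const c
    have hLc : L * x ^ (α - 1) * c = L := by
      rw [hcinv]; field_simp
    rw [hLc] at h2
    refine h2.congr' ?_
    filter_upwards [self_mem_nhdsWithin] with h hh
    simp only [Set.mem_compl_iff, Set.mem_singleton_iff] at hh
    rw [slope_def_field, show x + h * c - x = h * c by ring]
    rw [div_mul_eq_mul_div, mul_div_mul_right _ _ hcpos.ne']


/-- Chain rule for the conformable derivative: if `f` is `α`-differentiable at `a > 0`
with `f(a) > 0` and `g` is `α`-differentiable at `f(a)`, then `g ∘ f` is
`α`-differentiable at `a` and `T_α(g∘f)(a) = T_α(g)(f(a))·T_α(f)(a)·f(a)^{α-1}`. -/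
theorem conf_deriv_chain_rule (α : ℝ) (hα : α ∈ Set.Ioc (0:ℝ) 1) (f g : ℝ → ℝ)
    (a : ℝ) (ha : 0 < a) (hfa : 0 < f a) (F G : ℝ)
    (hf : HasConfDerivAt α f a F) (hg : HasConfDerivAt α g (f a) G) :
    HasConfDerivAt α (g ∘ f) a (G * F * f a ^ (α - 1)) := by
  rw [conf_iff_deriv α f a F ha] at hf
  rw [conf_iff_deriv α g (f a) G hfa] at hg
  rw [conf_iff_deriv α (g ∘ f) a _ ha]
  have := hg.comp a hf
  exact this.congr_deriv (by ring)
end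

section
/- Let α ∈ (0,1], f : ℝⁿ → ℝᵐ with component functions f₁,...,fₘ, and g : ℝᵐ → ℝᵖ. Let a = (a₁,...,aₙ) ∈ ℝⁿ with each aᵢ > 0 and suppose fᵢ(a) > 0 for all i = 1,...,m. If f is α-differentiable at a and g is α-differentiable at f(a), then the conformable Jacobian matrices satisfy (g ∘ f)^α(a) = g^α(f(a)) · diag(f₁(a)^{α-1}, ..., fₘ(a)^{α-1}) · f^α(a). -/
open Filter Topology Asymptotics

/-- The conformable Jacobian matrix of a linear map `L : ℝⁿ → ℝᵐ` with respect to the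
standard bases. -/
noncomputable def confJacobian {n m : ℕ}
    (L : EuclideanSpace ℝ (Fin n) →ₗ[ℝ] EuclideanSpace ℝ (Fin m)) :
    Matrix (Fin m) (Fin n) ℝ :=
  Matrix.of fun i j => L (EuclideanSpace.single j 1) i

noncomputable def diagL {n : ℕ} (c : Fin n → ℝ) :
    EuclideanSpace ℝ (Fin n) →ₗ[ℝ] EuclideanSpace ℝ (Fin n) where
  toFun h := WithLp.toLp 2 (fun i => c i * h i)
  map_add' x y := by ext i; simp [mul_add]
  map_smul' r x := by ext i; simp [smul_eq_mul]; ring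

noncomputable def diagE {n : ℕ} (c : Fin n → ℝ) (hc : ∀ i, c i ≠ 0) :
    EuclideanSpace ℝ (Fin n) ≃L[ℝ] EuclideanSpace ℝ (Fin n) :=
  LinearEquiv.toContinuousLinearEquiv
  { diagL c with
    invFun := fun h => WithLp.toLp 2 (fun i => (c i)⁻¹ * h i)
    left_inv := fun x => by
      ext i
      show (c i)⁻¹ * (c i * x i) = x i
      field_simp
      exact mul_div_cancel_left₀ _ (hc i)
    right_inv := fun x => by
      ext i
      show c i * ((c i)⁻¹ * x i) = x i
      field_simp
      exact mul_div_cancel_left₀ _ (hc i) }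

theorem conformableAt_iff_hasFDerivAt {n : ℕ} {F : Type*} [NormedAddCommGroup F]
    [NormedSpace ℝ F] {α : ℝ} {f : EuclideanSpace ℝ (Fin n) → F}
    {a : EuclideanSpace ℝ (Fin n)} (ha : ∀ i, 0 < a i)
    (L : EuclideanSpace ℝ (Fin n) →ₗ[ℝ] F) :
    ConformableAt α f a L ↔ HasFDerivAt f
      (LinearMap.toContinuousLinearMap (L ∘ₗ diagL (fun i => a i ^ (α - 1)))) a := by
  have hc : ∀ i, a i ^ (1 - α) ≠ 0 := fun i => (Real.rpow_pos_of_pos (ha i) _).ne'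
  set D := diagE (fun i => a i ^ (1 - α)) hc with hD
  set L' := LinearMap.toContinuousLinearMap (L ∘ₗ diagL (fun i => a i ^ (α - 1))) with hL'
  have hshift : ∀ h, confShift α a h = a + D h := by
    intro h
    ext i
    show a i + h i * a i ^ (1 - α) = a i + a i ^ (1 - α) * h i
    ring
  have hLD : ∀ h, L' (D h) = L h := by
    intro h
    show L (WithLp.toLp 2 (fun i => a i ^ (α - 1) * (a i ^ (1 - α) * h i))) = L h
    congr 2
    funext i
    rw [← mul_assoc, ← Real.rpow_add (ha i)]
    norm_num
  set v : EuclideanSpace ℝ (Fin n) → F := fun h => f (confShift α a h) - f a - L h with hv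
  have hv0 : v 0 = 0 := by
    have : confShift α a 0 = a := by
      ext i
      show a i + (0:EuclideanSpace ℝ (Fin n)) i * a i ^ (1 - α) = a i
      simp
    simp [hv, this]
  -- step 1: HasFDerivAt ↔ v =o id
  have step1 : HasFDerivAt f L' a ↔ v =o[𝓝 0] (id : EuclideanSpace ℝ (Fin n) → _) := by
    rw [hasFDerivAt_iff_isLittleO_nhds_zero]
    constructor
    · intro h
      have h2 := (h.comp_tendsto (D.toContinuousLinearMap.continuous.tendsto' 0 0 (by simp)))
      have h3 : (fun h : EuclideanSpace ℝ (Fin n) => (D : _ → _) h) =O[𝓝 0]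
          (id : EuclideanSpace ℝ (Fin n) → _) := D.toContinuousLinearMap.isBigO_id _
      have := h2.trans_isBigO h3
      refine this.congr_left ?_
      intro x
      simp [Function.comp, hv, hshift x, hLD x]
    · intro h
      have h2 := (h.comp_tendsto (D.symm.toContinuousLinearMap.continuous.tendsto' 0 0 (by simp)))
      have h3 : (fun h : EuclideanSpace ℝ (Fin n) => (D.symm : _ → _) h) =O[𝓝 0]
          (id : EuclideanSpace ℝ (Fin n) → _) := D.symm.toContinuousLinearMap.isBigO_id _
      have h4 := h2.trans_isBigO h3
      refine h4.congr_left ?_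
      intro x
      have hDx : (D : _ → _) (D.symm x) = x := D.apply_symm_apply x
      have hLs : L (D.symm x) = L' x := by
        show L (WithLp.toLp 2 (fun i => (a i ^ (1 - α))⁻¹ * x i)) = L (WithLp.toLp 2 (fun i => a i ^ (α - 1) * x i))
        congr 2
        funext i
        rw [← Real.rpow_neg_one, ← Real.rpow_mul (ha i).le]
        ring_nf
      simp [Function.comp, hv, hshift, hDx, hLs]
  -- step 2: v =o id ↔ ConformableAt
  have key : (v =o[𝓝 0] (id : EuclideanSpace ℝ (Fin n) → _)) ↔
      Tendsto (fun h : EuclideanSpace ℝ (Fin n) => ‖v h‖ / ‖h‖) (𝓝 0) (𝓝 0) := by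
    rw [← isLittleO_norm_norm]
    exact isLittleO_iff_tendsto (fun x hx => by
      have hx0 : x = 0 := by simpa using hx
      simp [hx0, hv0])
  have step2 : (v =o[𝓝 0] (id : EuclideanSpace ℝ (Fin n) → _)) ↔ ConformableAt α f a L := by
    rw [key]
    unfold ConformableAt
    constructor
    · intro h
      exact h.mono_left nhdsWithin_le_nhds
    · intro h
      rw [← nhdsNE_sup_pure, tendsto_sup]
      refine ⟨h, ?_⟩
      simpa [hv0] using tendsto_pure_nhds
        (fun h : EuclideanSpace ℝ (Fin n) => ‖v h‖ / ‖h‖) 0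
  rw [← step1] at step2
  exact step2.symm

lemma eq_sum_single {m : ℕ} (w : EuclideanSpace ℝ (Fin m)) :
    w = ∑ k, w k • EuclideanSpace.single k (1:ℝ) := by
  have := (EuclideanSpace.basisFun (Fin m) ℝ).sum_repr w
  simp only [EuclideanSpace.basisFun_apply, EuclideanSpace.basisFun_repr] at this
  exact this.symm

lemma lin_apply_coord {m q : ℕ} (M : EuclideanSpace ℝ (Fin m) →ₗ[ℝ] EuclideanSpace ℝ (Fin q))
    (w : EuclideanSpace ℝ (Fin m)) (i : Fin q) :
    M w i = ∑ k, w k * M (EuclideanSpace.single k 1) i := by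
  conv_lhs => rw [eq_sum_single w]
  rw [map_sum]
  induction (Finset.univ : Finset (Fin m)) using Finset.induction_on with
  | empty => simp
  | insert x s hx ih =>
    rw [Finset.sum_insert hx, Finset.sum_insert hx, ← ih]
    simp [PiLp.add_apply, PiLp.smul_apply, smul_eq_mul]

/-- Chain rule in Jacobian form: if `f` is conformably `α`-differentiable at `a`
(each `aᵢ > 0`, each `fᵢ(a) > 0`) and `g` is conformably `α`-differentiable at `f(a)`,
then `(g ∘ f)^α(a) = g^α(f(a)) · diag(f₁(a)^{α-1},...,fₘ(a)^{α-1}) · f^α(a)`. -/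
theorem conformable_chain_rule_jacobian {n m p : ℕ} (α : ℝ) (hα : α ∈ Set.Ioc (0:ℝ) 1)
    (f : EuclideanSpace ℝ (Fin n) → EuclideanSpace ℝ (Fin m))
    (g : EuclideanSpace ℝ (Fin m) → EuclideanSpace ℝ (Fin p))
    (a : EuclideanSpace ℝ (Fin n)) (ha : ∀ i, 0 < a i) (hfa : ∀ i, 0 < f a i)
    (L : EuclideanSpace ℝ (Fin n) →ₗ[ℝ] EuclideanSpace ℝ (Fin m))
    (M : EuclideanSpace ℝ (Fin m) →ₗ[ℝ] EuclideanSpace ℝ (Fin p))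
    (hf : ConformableAt α f a L) (hg : ConformableAt α g (f a) M) :
    ∃ N : EuclideanSpace ℝ (Fin n) →ₗ[ℝ] EuclideanSpace ℝ (Fin p),
      ConformableAt α (g ∘ f) a N ∧
      confJacobian N
        = confJacobian M * Matrix.diagonal (fun i => f a i ^ (α - 1)) * confJacobian L := by
  set dA : Fin n → ℝ := fun i => a i ^ (α - 1) with hdA
  set dF : Fin m → ℝ := fun i => f a i ^ (α - 1) with hdF
  set N : EuclideanSpace ℝ (Fin n) →ₗ[ℝ] EuclideanSpace ℝ (Fin p) :=
    (M ∘ₗ diagL dF) ∘ₗ L with hN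
  refine ⟨N, ?_, ?_⟩
  · have hf' := (conformableAt_iff_hasFDerivAt ha L).1 hf
    have hg' := (conformableAt_iff_hasFDerivAt hfa M).1 hg
    have hcomp := hg'.comp a hf'
    rw [conformableAt_iff_hasFDerivAt ha N]
    have hEq : LinearMap.toContinuousLinearMap (N ∘ₗ diagL dA)
        = (LinearMap.toContinuousLinearMap (M ∘ₗ diagL dF)).comp
          (LinearMap.toContinuousLinearMap (L ∘ₗ diagL dA)) := by
      ext x
      rfl
    rw [hEq]
    exact hcomp
  · ext i j
    have lhs : confJacobian N i j
        = ∑ k, dF k * (L (EuclideanSpace.single j 1) k) * M (EuclideanSpace.single k 1) i := by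
      show M (diagL dF (L (EuclideanSpace.single j 1))) i = _
      rw [lin_apply_coord]
      rfl
    rw [lhs]
    simp only [confJacobian, Matrix.mul_apply, Matrix.diagonal, Matrix.of_apply]
    refine Finset.sum_congr rfl fun k _ => ?_
    simp only [mul_ite, mul_zero, Finset.sum_ite_eq', Finset.mem_univ, if_true]
    ring
end

section
/- Let f : ℝⁿ → ℝᵐ with component functions f₁,...,fₘ, α ∈ (0,1], and a = (a₁,...,aₙ) ∈ ℝⁿ with each aᵢ > 0. If f is α-differentiable at a, then for all 1 ≤ i ≤ m and 1 ≤ j ≤ n the j-th conformable partial derivative (∂^α/∂x_j^α) fᵢ(a) exists, and the (i,j) entry of the conformable Jacobian matrix f^α(a) equals (∂^α/∂x_j^α) fᵢ(a). -/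
open Filter Topology

/-- `g : ℝⁿ → ℝ` has `j`-th conformable partial derivative `v` of order `α` at `a`,
i.e. `lim_{ε→0} (g(a₁,...,aⱼ + ε·aⱼ^{1-α},...,aₙ) - g(a))/ε = v`. -/
noncomputable def HasConfPartialAt {n : ℕ} (α : ℝ) (g : EuclideanSpace ℝ (Fin n) → ℝ)
    (a : EuclideanSpace ℝ (Fin n)) (j : Fin n) (v : ℝ) : Prop :=
  Filter.Tendsto (fun ε : ℝ =>
      (g (WithLp.toLp 2 (Function.update a j (a j + ε * a j ^ (1 - α)))) - g a) / ε) (𝓝[≠] 0) (𝓝 v)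

lemma euclidean_abs_apply_le_norm {n : ℕ} (x : EuclideanSpace ℝ (Fin n)) (i : Fin n) :
    |x i| ≤ ‖x‖ := by
  rw [EuclideanSpace.norm_eq, ← Real.sqrt_sq_eq_abs]
  apply Real.sqrt_le_sqrt
  calc (x i) ^ 2 = ‖x i‖ ^ 2 := by rw [Real.norm_eq_abs, sq_abs]
  _ ≤ ∑ k, ‖x k‖ ^ 2 :=
      Finset.single_le_sum (fun k _ => sq_nonneg ‖x k‖) (Finset.mem_univ i)

/-- If `f : ℝⁿ → ℝᵐ` is conformably `α`-differentiable at `a` (each `aᵢ > 0`), then all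
conformable partial derivatives `(∂^α/∂xⱼ^α)fᵢ(a)` exist and give the entries of the
conformable Jacobian matrix: `f^α(a)_{ij} = (∂^α/∂xⱼ^α)fᵢ(a)`. -/
theorem conformable_jacobian_eq_partials {n m : ℕ} (α : ℝ) (hα : α ∈ Set.Ioc (0:ℝ) 1)
    (f : EuclideanSpace ℝ (Fin n) → EuclideanSpace ℝ (Fin m))
    (a : EuclideanSpace ℝ (Fin n)) (ha : ∀ i, 0 < a i)
    (L : EuclideanSpace ℝ (Fin n) →ₗ[ℝ] EuclideanSpace ℝ (Fin m))
    (hL : ConformableAt α f a L) :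
    ∀ (i : Fin m) (j : Fin n),
      HasConfPartialAt α (fun x => f x i) a j (L (EuclideanSpace.single j 1) i) := by
  intro i j
  set e : EuclideanSpace ℝ (Fin n) := EuclideanSpace.single j 1 with he
  have he0 : e ≠ 0 := by
    intro h
    have h2 : e j = 0 := by rw [h]; rfl
    simp [he, EuclideanSpace.single_apply] at h2
  have hphi : Tendsto (fun ε : ℝ => ε • e) (𝓝[≠] (0:ℝ))
      (𝓝[≠] (0 : EuclideanSpace ℝ (Fin n))) := by
    refine tendsto_nhdsWithin_of_tendsto_nhds_of_eventually_within _ ?_ ?_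
    · have hc : Continuous fun ε : ℝ => ε • e := continuous_id.smul continuous_const
      have := (hc.tendsto 0).mono_left (nhdsWithin_le_nhds (s := {(0:ℝ)}ᶜ))
      simpa using this
    · filter_upwards [self_mem_nhdsWithin] with ε hε
      exact smul_ne_zero hε he0
  have key := hL.comp hphi
  rw [HasConfPartialAt, tendsto_iff_norm_sub_tendsto_zero]
  refine squeeze_zero' (Eventually.of_forall fun ε => norm_nonneg _) ?_ key
  filter_upwards [self_mem_nhdsWithin] with ε hε
  have hεpos : (0:ℝ) < |ε| := abs_pos.mpr hε
  have hshift : confShift α a (ε • e) = WithLp.toLp 2 (Function.update a j (a j + ε * a j ^ (1 - α))) := by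
    ext k
    by_cases hk : k = j
    · subst hk
      simp [confShift, he, Function.update_self, EuclideanSpace.single_apply]
    · simp [confShift, he, Function.update_of_ne hk, EuclideanSpace.single_apply, hk]
  have hnorm : ‖ε • e‖ = |ε| := by
    rw [norm_smul, he, EuclideanSpace.norm_single, norm_one, mul_one, Real.norm_eq_abs]
  show ‖(f (WithLp.toLp 2 (Function.update a j (a j + ε * a j ^ (1-α)))) i - f a i)/ε - L e i‖
      ≤ ‖f (confShift α a (ε • e)) - f a - L (ε • e)‖ / ‖ε • e‖
  rw [hshift, hnorm]
  set y := f (WithLp.toLp 2 (Function.update a j (a j + ε * a j ^ (1-α)))) with hy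
  have hdiff : (y i - f a i)/ε - L e i = (y - f a - L (ε • e)) i / ε := by
    rw [map_smul]
    have : (y - f a - ε • L e) i = y i - f a i - ε * L e i := rfl
    rw [this]
    have hne : ε ≠ 0 := hε
    field_simp
  rw [hdiff, Real.norm_eq_abs, abs_div]
  gcongr
  exact euclidean_abs_apply_le_norm _ i
end

section
/- Let f : ℝ → ℝ, α ∈ (0,1], and t₀ > 0. If f is α-differentiable at t₀ (i.e., T_α(f)(t₀) exists), then f is continuous at t₀. -/
open Filter Topology

/-- If `f` is `α`-differentiable at `t₀ > 0`, then `f` is continuous at `t₀`. -/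
theorem continuousAt_of_hasConfDerivAt (α : ℝ) (hα : α ∈ Set.Ioc (0:ℝ) 1) (f : ℝ → ℝ)
    (t₀ : ℝ) (ht₀ : 0 < t₀) (F : ℝ) (hf : HasConfDerivAt α f t₀ F) :
    ContinuousAt f t₀ := by
  set c : ℝ := t₀ ^ (1 - α) with hc
  have hcpos : 0 < c := Real.rpow_pos_of_pos ht₀ _
  set φ : ℝ → ℝ := fun t => (t - t₀) / c with hφ
  have hφ0 : Tendsto φ (𝓝 t₀) (𝓝 0) := by
    have : Tendsto φ (𝓝 t₀) (𝓝 ((t₀ - t₀) / c)) := by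
      exact (tendsto_id.sub tendsto_const_nhds).div_const c
    simpa using this
  have hφne : Tendsto φ (𝓝[≠] t₀) (𝓝[≠] 0) := by
    rw [nhdsWithin, nhdsWithin]
    refine Tendsto.inf hφ0 ?_
    refine tendsto_principal_principal.2 ?_
    intro t ht
    simp only [Set.mem_compl_iff, Set.mem_singleton_iff] at ht ⊢
    intro h
    apply ht
    have := div_eq_zero_iff.1 h
    rcases this with h | h
    · linarith [sub_eq_zero.1 h]
    · exact absurd h hcpos.ne'
  have key : Tendsto (fun t => f t - f t₀) (𝓝[≠] t₀) (𝓝 0) := by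
    have h1 : Tendsto (fun t => (f (t₀ + φ t * c) - f t₀) / φ t * φ t) (𝓝[≠] t₀)
        (𝓝 (F * 0)) :=
      ((hf.comp hφne).mul (hφ0.mono_left nhdsWithin_le_nhds))
    rw [mul_zero] at h1
    refine h1.congr' ?_
    filter_upwards [self_mem_nhdsWithin] with t ht
    simp only [Set.mem_compl_iff, Set.mem_singleton_iff] at ht
    have hφt : φ t ≠ 0 := by
      rw [hφ, div_ne_zero_iff, sub_ne_zero]
      exact ⟨ht, hcpos.ne'⟩
    have ht' : t₀ + φ t * c = t := by
      show t₀ + (t - t₀) / c * c = t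
      rw [div_mul_cancel₀ _ hcpos.ne']; ring
    rw [ht', div_mul_cancel₀ _ hφt]
  rw [← continuousWithinAt_compl_self]
  have : Tendsto f (𝓝[≠] t₀) (𝓝 (f t₀)) := by
    have := key.add (tendsto_const_nhds (x := f t₀) (f := 𝓝[≠] t₀))
    simpa using this
  exact this
end

section
/- Let α ∈ (0,1], t > 0, and f : ℝ → ℝ. If f is differentiable at t (in the usual sense), then f is α-differentiable at t and T_α(f)(t) = t^{1-α}·f'(t). -/
open Filter Topology

/-- If `f` is differentiable at `t > 0` in the usual sense, then `f` is
`α`-differentiable at `t` and `T_α(f)(t) = t^{1-α}·f'(t)`. -/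
theorem hasConfDerivAt_of_differentiableAt (α : ℝ) (hα : α ∈ Set.Ioc (0:ℝ) 1) (t : ℝ)
    (ht : 0 < t) (f : ℝ → ℝ) (hf : DifferentiableAt ℝ f t) :
    HasConfDerivAt α f t (t ^ (1 - α) * deriv f t) := by
  set c := t ^ (1 - α) with hc
  have hc0 : c ≠ 0 := ne_of_gt (Real.rpow_pos_of_pos ht _)
  have hslope := hasDerivAt_iff_tendsto_slope.mp hf.hasDerivAt
  have hmap : Tendsto (fun h : ℝ => t + h * c) (𝓝[≠] 0) (𝓝[≠] t) := by
    apply tendsto_nhdsWithin_of_tendsto_nhds_of_eventually_within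
    · have hcont : Continuous (fun h : ℝ => t + h * c) := by continuity
      have h0 : Tendsto (fun h : ℝ => t + h * c) (𝓝[≠] 0) (𝓝 (t + 0 * c)) :=
        (hcont.tendsto 0).mono_left nhdsWithin_le_nhds
      simpa using h0
    · filter_upwards [self_mem_nhdsWithin] with h hh
      simp only [Set.mem_compl_iff, Set.mem_singleton_iff] at hh ⊢
      intro heq
      apply hh
      have hmc : h * c = 0 := by linarith
      exact (mul_eq_zero.mp hmc).resolve_right hc0
  have hT := ((hslope.comp hmap).const_mul c)
  refine hT.congr' ?_
  filter_upwards [self_mem_nhdsWithin] with h hh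
  simp only [Set.mem_compl_iff, Set.mem_singleton_iff] at hh
  simp only [Function.comp, slope_def_field]
  have h1 : t + h * c - t = h * c := by ring
  rw [h1, ← hc]
  field_simp
end
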